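/- Let q = 2^e with e ≥ 2. The centralizer in SL₂(F_q) of any involution is an elementary abelian 2-group of order q. -/
import Mathlib

open Matrix

private lemma char2_sq_inj {F : Type*} [Field F] (h2 : (2:F) = 0) {x y : F}
    (h : x * x = y * y) : x = y := by
  have h3 : (x - y) * (x - y) = 0 := by linear_combination h + (y*y - x*y) * h2
  exact sub_eq_zero.mp (mul_self_eq_zero.mp h3)

private lemma sl2_aux {F : Type*} [Field F] (h2 : (2:F) = 0)
    (N : Matrix (Fin 2) (Fin 2) F) (hN0 : N ≠ 0) (hNsq : N * N = 0)
    (B : Matrix (Fin 2) (Fin 2) F) (hB : B * N = N * B) (hdet : B.det = 1) :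
    ∃ t : F, B = 1 + t • N := by
  set n := N 0 0 with hn
  set p := N 0 1 with hp
  set r := N 1 0 with hr
  set s := N 1 1 with hs
  have e00 : n * n + p * r = 0 := by
    simpa [Matrix.mul_apply, Fin.sum_univ_two] using Matrix.ext_iff.mpr hNsq 0 0
  have e11 : r * p + s * s = 0 := by
    simpa [Matrix.mul_apply, Fin.sum_univ_two] using Matrix.ext_iff.mpr hNsq 1 1
  have hns : n = s := char2_sq_inj h2 (by linear_combination e00 - e11)
  set x := B 0 0 with hx
  set y := B 0 1 with hy
  set z := B 1 0 with hz
  set w := B 1 1 with hw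
  have f00 : x * n + y * r = n * x + p * z := by
    simpa [Matrix.mul_apply, Fin.sum_univ_two] using Matrix.ext_iff.mpr hB 0 0
  have f01 : x * p + y * s = n * y + p * w := by
    simpa [Matrix.mul_apply, Fin.sum_univ_two] using Matrix.ext_iff.mpr hB 0 1
  have f10 : z * n + w * r = r * x + s * z := by
    simpa [Matrix.mul_apply, Fin.sum_univ_two] using Matrix.ext_iff.mpr hB 1 0
  have hd : x * w - y * z = 1 := by rw [← Matrix.det_fin_two]; exact hdet
  by_cases hp0 : p = 0
  · -- p = 0 case
    have hn0 : n = 0 := char2_sq_inj h2 (by linear_combination e00 - r * hp0)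
    have hs0 : s = 0 := hns ▸ hn0
    have hr0 : r ≠ 0 := by
      intro hr0
      apply hN0
      ext i j
      fin_cases i <;> fin_cases j <;>
        simp [← hn, ← hp, ← hr, ← hs, hn0, hp0, hr0, hs0]
    have hy0 : y = 0 := by
      have : y * r = 0 := by linear_combination f00 + z * hp0
      exact (mul_eq_zero.mp this).resolve_right hr0
    have hwx : w = x := by
      have : (w - x) * r = 0 := by linear_combination f10 - z * hn0 - z * hs0 + s * z * h2
      have := (mul_eq_zero.mp this).resolve_right hr0
      exact sub_eq_zero.mp this
    have hx1 : x = 1 := char2_sq_inj h2 (by linear_combination hd - x * hwx + z * hy0)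
    refine ⟨z / r, ?_⟩
    ext i j
    fin_cases i <;> fin_cases j <;>
      simp [Matrix.add_apply, Matrix.one_apply, Matrix.smul_apply, ← hn, ← hp, ← hr, ← hs,
        ← hx, ← hy, ← hz, ← hw, hn0, hp0, hs0, hy0, hwx, hx1, div_mul_cancel₀, hr0]
  · -- p ≠ 0 case
    have hwx : w = x := by
      have : p * (x - w) = 0 := by linear_combination f01 + y * hns
      have := (mul_eq_zero.mp this).resolve_left hp0
      exact (sub_eq_zero.mp this).symm
    have hzy' : p * z = y * r := by linear_combination -f00
    have hx' : x = 1 + (y / p) * n := by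
      apply char2_sq_inj h2
      have hpp : p * p ≠ 0 := mul_ne_zero hp0 hp0
      field_simp
      linear_combination p^2*hd - p^2*x*hwx + p*y*hzy' + y^2*e00 + (-(y^2*n^2) - p*y*n)*h2
    have h01 : y = (y / p) * p := by field_simp
    have h10 : z = (y / p) * r := by field_simp; linear_combination hzy'
    have h11 : w = 1 + (y / p) * s := by rw [hwx, hx', hns]
    refine ⟨y / p, ?_⟩
    ext i j
    fin_cases i <;> fin_cases j <;>
      simp [Matrix.add_apply, Matrix.one_apply, Matrix.smul_apply, ← hn, ← hp, ← hr, ← hs,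
        ← hx, ← hy, ← hz, ← hw, hx', ← h01, ← h10, h11]

theorem sl2_char_two_centralizer_of_involution (e : ℕ) (he : 2 ≤ e)
    (F : Type*) [Field F] [Fintype F] (hF : Fintype.card F = 2 ^ e)
    (A : Matrix.SpecialLinearGroup (Fin 2) F) (hA : orderOf A = 2) :
    Nat.card (Subgroup.centralizer {A}) = 2 ^ e ∧
    (∀ x ∈ Subgroup.centralizer {A}, ∀ y ∈ Subgroup.centralizer {A}, x * y = y * x) ∧
    (∀ x ∈ Subgroup.centralizer {A}, x ^ 2 = 1) := by
  -- characteristic 2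
  haveI hchar : CharP F 2 := by
    obtain ⟨q, hq⟩ := CharP.exists F
    haveI := hq
    haveI hqp : Fact q.Prime := ⟨CharP.char_is_prime F q⟩
    obtain ⟨m, -, hcard⟩ := FiniteField.card F q
    have hdvd : q ∣ 2 ^ e := by rw [← hF, hcard]; exact dvd_pow_self q m.ne_zero
    have hq2 : q = 2 :=
      (Nat.prime_dvd_prime_iff_eq hqp.out Nat.prime_two).mp (hqp.out.dvd_of_dvd_pow hdvd)
    rwa [hq2] at hq
  have h2 : (2 : F) = 0 := by exact_mod_cast CharP.cast_eq_zero F 2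
  set a : Matrix (Fin 2) (Fin 2) F := (A : Matrix (Fin 2) (Fin 2) F) with ha
  have hA2 : A * A = 1 := by
    have := pow_orderOf_eq_one A
    rwa [hA, sq] at this
  have ha2 : a * a = 1 := by
    have := congrArg (fun M : Matrix.SpecialLinearGroup (Fin 2) F =>
      (M : Matrix (Fin 2) (Fin 2) F)) hA2
    simpa using this
  have hAne1 : A ≠ 1 := by
    intro h
    rw [h, orderOf_one] at hA
    omega
  set N : Matrix (Fin 2) (Fin 2) F := a - 1 with hNdef
  have hN0 : N ≠ 0 := by
    rw [hNdef, sub_ne_zero]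
    intro h
    exact hAne1 (Subtype.ext h)
  have hNsq : N * N = 0 := by
    have expand : N * N = a * a - (a + a) + 1 := by rw [hNdef]; noncomm_ring
    have haa : a + a = 0 := by rw [← two_smul F a, h2, zero_smul]
    have h11 : (1 : Matrix (Fin 2) (Fin 2) F) + 1 = 0 := by
      rw [← two_smul F (1 : Matrix (Fin 2) (Fin 2) F), h2, zero_smul]
    rw [expand, ha2, haa, sub_zero]
    exact h11
  -- key product formula
  have key : ∀ s t : F, (1 + s • N) * (1 + t • N) = 1 + (s + t) • N := by
    intro s t
    rw [mul_add, add_mul, add_mul, mul_one, one_mul, mul_one, smul_mul_smul_comm, hNsq,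
      smul_zero, add_zero, add_smul, add_assoc]
  -- determinant of 1 + t • N
  have hdet1 : ∀ t : F, (1 + t • N).det = 1 := by
    intro t
    have e00 : N 0 0 * N 0 0 + N 0 1 * N 1 0 = 0 := by
      simpa [Matrix.mul_apply, Fin.sum_univ_two] using Matrix.ext_iff.mpr hNsq 0 0
    have e11 : N 1 0 * N 0 1 + N 1 1 * N 1 1 = 0 := by
      simpa [Matrix.mul_apply, Fin.sum_univ_two] using Matrix.ext_iff.mpr hNsq 1 1
    have hns : N 0 0 = N 1 1 := char2_sq_inj h2 (by linear_combination e00 - e11)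
    rw [Matrix.det_fin_two]
    simp only [Matrix.add_apply, Matrix.one_apply, Matrix.smul_apply, smul_eq_mul,
      if_true, if_neg, one_ne_zero, zero_ne_one, reduceIte, zero_add, add_zero]
    linear_combination t^2*e00 - (t + t^2*N 0 0)*hns + (t*N 0 0 - t^2*N 0 1*N 1 0)*h2
  -- commuting with A iff commuting with N, on matrix level
  have hNa : ∀ B : Matrix (Fin 2) (Fin 2) F, B * a = a * B ↔ B * N = N * B := by
    intro B
    rw [hNdef]
    constructor <;> intro h
    · rw [mul_sub, sub_mul, h, mul_one, one_mul]
    · have := h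
      rw [mul_sub, sub_mul, mul_one, one_mul] at this
      have := sub_left_injective this
      exact this
  -- the map φ
  set φ : F → Matrix.SpecialLinearGroup (Fin 2) F := fun t => ⟨1 + t • N, hdet1 t⟩ with hφ
  have hφmem : ∀ t, φ t ∈ Subgroup.centralizer {A} := by
    intro t
    rw [Subgroup.mem_centralizer_singleton_iff]
    apply Subtype.ext
    have : ((φ t : Matrix.SpecialLinearGroup (Fin 2) F) : Matrix (Fin 2) (Fin 2) F) * a
        = a * ((φ t : Matrix.SpecialLinearGroup (Fin 2) F) : Matrix (Fin 2) (Fin 2) F) := by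
      rw [hNa]
      show (1 + t • N) * N = N * (1 + t • N)
      rw [mul_add, add_mul, mul_one, one_mul, smul_mul_assoc, mul_smul_comm]
    simpa using this
  have hφsurj : ∀ x ∈ Subgroup.centralizer {A}, ∃ t, φ t = x := by
    intro x hx
    rw [Subgroup.mem_centralizer_singleton_iff] at hx
    have hxa : (x : Matrix (Fin 2) (Fin 2) F) * a = a * (x : Matrix (Fin 2) (Fin 2) F) := by
      have := congrArg (fun M : Matrix.SpecialLinearGroup (Fin 2) F =>
        (M : Matrix (Fin 2) (Fin 2) F)) hx
      simpa using this
    obtain ⟨t, ht⟩ := sl2_aux h2 N hN0 hNsq (x : Matrix (Fin 2) (Fin 2) F)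
      ((hNa _).mp hxa) x.2
    exact ⟨t, Subtype.ext ht.symm⟩
  have hφinj : Function.Injective φ := by
    intro s t hst
    have : (1 : Matrix (Fin 2) (Fin 2) F) + s • N = 1 + t • N := congrArg Subtype.val hst
    have h' : (s - t) • N = 0 := by
      have := add_left_cancel this
      rw [sub_smul, this, sub_self]
    rcases smul_eq_zero.mp h' with h | h
    · exact sub_eq_zero.mp h
    · exact absurd h hN0
  -- the equivalence with the centralizer
  have hbij : Function.Bijective (fun t : F => (⟨φ t, hφmem t⟩ :
      Subgroup.centralizer {A})) := by
    constructor
    · intro s t h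
      exact hφinj (congrArg Subtype.val h)
    · rintro ⟨x, hx⟩
      obtain ⟨t, ht⟩ := hφsurj x hx
      exact ⟨t, Subtype.ext ht⟩
  refine ⟨?_, ?_, ?_⟩
  · rw [← Nat.card_congr (Equiv.ofBijective _ hbij), Nat.card_eq_fintype_card, hF]
  · intro x hx y hy
    obtain ⟨s, hs⟩ := hφsurj x hx
    obtain ⟨t, ht⟩ := hφsurj y hy
    rw [← hs, ← ht]
    apply Subtype.ext
    show (1 + s • N) * (1 + t • N) = (1 + t • N) * (1 + s • N)
    rw [key, key, add_comm s t]
  · intro x hx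
    obtain ⟨t, ht⟩ := hφsurj x hx
    rw [← ht, sq]
    apply Subtype.ext
    show (1 + t • N) * (1 + t • N) = (1 : Matrix (Fin 2) (Fin 2) F)
    rw [key]
    have : t + t = 0 := by
      have : t + t = (2 : F) * t := by ring
      rw [this, h2, zero_mul]
    rw [this, zero_smul, add_zero]
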